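/- arXiv:1403.5533 — 4 statements merged into one kernel-verified Lean document; each statement's English description precedes it below -/
import Mathlib

section
/- For all real x with 0 ≤ x ≤ π/2, if sin²(x) ≤ ε then sin²(x) ≥ x²(1 - (π²/12)ε). -/
open Real

lemma sub_cube_le_sin (x : ℝ) (hx : 0 ≤ x) : x - x ^ 3 / 6 ≤ Real.sin x := by
  have hmono : MonotoneOn (fun t : ℝ => Real.sin t - t + t ^ 3 / 6) (Set.Ici 0) := by
    apply monotoneOn_of_deriv_nonneg (convex_Ici 0)
    · fun_prop
    · fun_prop
    · intro t ht
      have hD : HasDerivAt (fun t : ℝ => Real.sin t - t + t ^ 3 / 6)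
          (Real.cos t - 1 + (3 : ℕ) * t ^ 2 / 6) t :=
        ((Real.hasDerivAt_sin t).sub (hasDerivAt_id t)).add
          ((hasDerivAt_pow 3 t).div_const 6)
      rw [hD.deriv]
      have := Real.one_sub_sq_div_two_le_cos (x := t)
      push_cast
      linarith
  have := hmono (Set.self_mem_Ici) (Set.mem_Ici.2 hx) hx
  simp at this
  linarith

theorem stmt_0 (x ε : ℝ) (hx0 : 0 ≤ x) (hx1 : x ≤ π / 2)
    (h : Real.sin x ^ 2 ≤ ε) :
    Real.sin x ^ 2 ≥ x ^ 2 * (1 - (π ^ 2 / 12) * ε) := by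
  have hpi : π ^ 2 < 12 := by nlinarith [Real.pi_lt_d2]
  have hjordan : 2 / π * x ≤ Real.sin x := Real.mul_le_sin hx0 hx1
  have hcube : x - x ^ 3 / 6 ≤ Real.sin x := sub_cube_le_sin x hx0
  have hx2 : x ^ 2 ≤ π ^ 2 / 4 := by nlinarith [Real.pi_pos]
  have hxc : 0 ≤ x - x ^ 3 / 6 := by nlinarith
  have hsq : x ^ 2 - x ^ 4 / 3 ≤ Real.sin x ^ 2 := by
    nlinarith [mul_nonneg (sub_nonneg.2 hcube) (by linarith : (0:ℝ) ≤ Real.sin x + (x - x ^ 3 / 6)), sq_nonneg (x ^ 3)]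
  have hε : 4 / π ^ 2 * x ^ 2 ≤ ε := by
    have hpos : (0:ℝ) < π := Real.pi_pos
    have : (2 / π * x) ^ 2 ≤ Real.sin x ^ 2 := by
      nlinarith [Real.mul_le_sin hx0 hx1, mul_nonneg (div_nonneg (by norm_num : (0:ℝ) ≤ 2) hpos.le) hx0]
    calc 4 / π ^ 2 * x ^ 2 = (2 / π * x) ^ 2 := by field_simp; ring
    _ ≤ Real.sin x ^ 2 := this
    _ ≤ ε := h
  have hx4 : x ^ 4 / 3 ≤ x ^ 2 * (π ^ 2 / 12) * ε := by
    have hpos : (0:ℝ) < π ^ 2 := by positivity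
    have h1 : x ^ 2 ≤ π ^ 2 / 4 * ε := by
      have := mul_le_mul_of_nonneg_left hε (le_of_lt (by positivity : (0:ℝ) < π ^ 2 / 4))
      calc x ^ 2 = π ^ 2 / 4 * (4 / π ^ 2 * x ^ 2) := by field_simp
      _ ≤ π ^ 2 / 4 * ε := this
    nlinarith [sq_nonneg x]
  nlinarith
end

section
/- Let H be a self-adjoint operator on a finite-dimensional inner product space 𝓗 and 𝓗₀ a subspace of dimension L'. Then for each 1 ≤ k ≤ L', the k-th smallest eigenvalue E_k of H satisfies E_k ≤ max over (k-1)-dimensional subspaces S of 𝓗₀ of min over unit vectors φ ∈ 𝓗₀ with φ ⊥ S of ⟨φ, Hφ⟩. -/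
open Module

private lemma aux_extend {H : Type*} [NormedAddCommGroup H] [InnerProductSpace ℝ H]
    [FiniteDimensional ℝ H] (H₀ : Submodule ℝ H) (d : ℕ) (hd : d ≤ finrank ℝ H₀) :
    ∀ n : ℕ, ∀ S₀ : Submodule ℝ H, S₀ ≤ H₀ → finrank ℝ S₀ + n = d →
      ∃ S : Submodule ℝ H, S₀ ≤ S ∧ S ≤ H₀ ∧ finrank ℝ S = d := by
  intro n
  induction n with
  | zero => exact fun S₀ h1 h2 => ⟨S₀, le_rfl, h1, by omega⟩
  | succ m ih =>
    intro S₀ h1 h2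
    have hne : S₀ ≠ H₀ := by
      intro h; rw [h] at h2; omega
    obtain ⟨x, hxH, hxS⟩ := SetLike.exists_of_lt (lt_of_le_of_ne h1 hne)
    have hx0 : x ≠ 0 := fun h => hxS (h ▸ S₀.zero_mem)
    have hinf : S₀ ⊓ Submodule.span ℝ {x} = ⊥ := by
      rw [eq_bot_iff]
      rintro y ⟨hy1, hy2⟩
      obtain ⟨c, rfl⟩ := Submodule.mem_span_singleton.1 hy2
      rcases eq_or_ne c 0 with rfl | hc
      · simp
      · exact absurd (by simpa [hc] using S₀.smul_mem c⁻¹ hy1) hxS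
    have hfr : finrank ℝ ↥(S₀ ⊔ Submodule.span ℝ {x}) = finrank ℝ S₀ + 1 := by
      have := Submodule.finrank_sup_add_finrank_inf_eq S₀ (Submodule.span ℝ {x})
      rw [hinf, finrank_bot, finrank_span_singleton hx0] at this
      omega
    obtain ⟨S, hS1, hS2, hS3⟩ := ih (S₀ ⊔ Submodule.span ℝ {x})
      (sup_le h1 ((Submodule.span_le).2 (Set.singleton_subset_iff.2 hxH)))
      (by omega)
    exact ⟨S, le_trans le_sup_left hS1, hS2, hS3⟩

private lemma aux_rayleigh {H : Type*} [NormedAddCommGroup H] [InnerProductSpace ℝ H]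
    [FiniteDimensional ℝ H]
    (T : H →ₗ[ℝ] H) (hT : T.IsSymmetric)
    (E : ℕ → ℝ) (hE : Monotone E)
    (b : OrthonormalBasis (Fin (finrank ℝ H)) ℝ H)
    (hb : ∀ i : Fin (finrank ℝ H), T (b i) = E (i : ℕ) • b i)
    (m : ℕ) (φ : H) (hφ : ∀ i : Fin (finrank ℝ H), (i : ℕ) < m → inner ℝ (b i) φ = (0 : ℝ)) :
    E m * ‖φ‖ ^ 2 ≤ inner ℝ φ (T φ) := by
  have hrepr : ∀ i, b.repr (T φ) i = E (i : ℕ) * b.repr φ i := by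
    intro i
    rw [b.repr_apply_apply, b.repr_apply_apply, ← hT (b i) φ, hb i,
      real_inner_smul_left]
  have h1 : (inner ℝ φ (T φ) : ℝ) = ∑ i : Fin (finrank ℝ H), E (i : ℕ) * (b.repr φ i) ^ 2 := by
    rw [← b.repr.inner_map_map φ (T φ), PiLp.inner_apply]
    refine Finset.sum_congr rfl fun i _ => ?_
    rw [hrepr i]
    simp [RCLike.inner_apply]
    ring
  have h2 : ‖φ‖ ^ 2 = ∑ i, (b.repr φ i) ^ 2 := by
    rw [← real_inner_self_eq_norm_sq, ← b.repr.inner_map_map φ φ, PiLp.inner_apply]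
    refine Finset.sum_congr rfl fun i _ => ?_
    simp [RCLike.inner_apply]
  rw [h1, h2, Finset.mul_sum]
  refine Finset.sum_le_sum fun i _ => ?_
  rcases lt_or_ge (i : ℕ) m with h | h
  · rw [b.repr_apply_apply, hφ i h]
    simp
  · have := hE h
    nlinarith [sq_nonneg (b.repr φ i)]

theorem stmt_6 {H : Type*} [NormedAddCommGroup H] [InnerProductSpace ℝ H]
    [FiniteDimensional ℝ H]
    (T : H →ₗ[ℝ] H) (hT : T.IsSymmetric)
    (E : ℕ → ℝ) (hE : Monotone E)
    (hbasis : ∃ b : OrthonormalBasis (Fin (finrank ℝ H)) ℝ H,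
      ∀ i : Fin (finrank ℝ H), T (b i) = E (i : ℕ) • b i)
    (H₀ : Submodule ℝ H) (L' : ℕ) (hL' : finrank ℝ H₀ = L')
    (k : ℕ) (hk1 : 1 ≤ k) (hk2 : k ≤ L') :
    E (k - 1) ≤
      ⨆ S : {S : Submodule ℝ H // S ≤ H₀ ∧ finrank ℝ S = k - 1},
        ⨅ φ : {φ : H // φ ∈ H₀ ∧ ‖φ‖ = 1 ∧ ∀ v ∈ S.1, inner ℝ φ v = (0 : ℝ)},
          (inner ℝ (φ : H) (T φ) : ℝ) := by
  obtain ⟨b, hb⟩ := hbasis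
  -- V = span of first k-1 eigenvectors
  set f : Fin (k - 1) → H := fun j => if h : (j : ℕ) < finrank ℝ H then b ⟨j, h⟩ else 0 with hf
  set V : Submodule ℝ H := Submodule.span ℝ (Set.range f) with hV
  set U : Submodule ℝ H := H₀ ⊓ Vᗮ with hU
  set S₀ : Submodule ℝ H := Uᗮ ⊓ H₀ with hS₀
  have hUH₀ : U ≤ H₀ := inf_le_left
  have hsum : finrank ℝ U + finrank ℝ S₀ = finrank ℝ H₀ :=
    Submodule.finrank_add_inf_finrank_orthogonal hUH₀
  have hVfr : finrank ℝ V ≤ k - 1 := by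
    have h1 := finrank_range_le_card (R := ℝ) f
    simpa [Set.finrank] using h1
  have hUfr : L' - (k - 1) ≤ finrank ℝ U := by
    have h1 := Submodule.finrank_sup_add_finrank_inf_eq H₀ Vᗮ
    rw [← hU] at h1
    rw [hL'] at h1
    have h2 : finrank ℝ V + finrank ℝ Vᗮ = finrank ℝ H := Submodule.finrank_add_finrank_orthogonal V
    have h3 : finrank ℝ ↥(H₀ ⊔ Vᗮ) ≤ finrank ℝ H := Submodule.finrank_le _
    omega
  have hS₀fr : finrank ℝ S₀ ≤ k - 1 := by omega
  obtain ⟨S, hSS₀, hSH₀, hSfr⟩ := aux_extend H₀ (k - 1) (by omega) (k - 1 - finrank ℝ S₀) S₀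
    inf_le_right (by omega)
  -- the chosen index
  set Sidx : {S : Submodule ℝ H // S ≤ H₀ ∧ finrank ℝ S = k - 1} := ⟨S, hSH₀, hSfr⟩ with hSidx
  -- members of the φ-index set for Sidx lie in U
  have hmemU : ∀ φ : H, φ ∈ H₀ → (∀ v ∈ S, inner ℝ φ v = (0 : ℝ)) → φ ∈ U := by
    intro φ hφH₀ hφS
    have hφS₀ : ∀ v ∈ S₀, inner ℝ φ v = (0 : ℝ) := fun v hv => hφS v (hSS₀ hv)
    have hdecomp : U ⊔ Uᗮ ⊓ H₀ = H₀ := Submodule.sup_orthogonal_inf_of_hasOrthogonalProjection hUH₀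
    rw [← hdecomp] at hφH₀
    obtain ⟨u, hu, s, hs, rfl⟩ := Submodule.mem_sup.1 hφH₀
    have hus : inner ℝ u s = (0 : ℝ) := hs.1 u hu
    have : inner ℝ (u + s) s = (0 : ℝ) := hφS₀ s hs
    rw [inner_add_left, hus, zero_add] at this
    have hs0 : s = 0 := inner_self_eq_zero.1 this
    simp [hs0, hu]
  -- nonempty φ-index
  have hSidxfr : finrank ℝ S + finrank ℝ ↥(Sᗮ ⊓ H₀) = finrank ℝ H₀ :=
    Submodule.finrank_add_inf_finrank_orthogonal hSH₀
  have hpos : 0 < finrank ℝ ↥(Sᗮ ⊓ H₀) := by omega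
  have hnb : (Sᗮ ⊓ H₀ : Submodule ℝ H) ≠ ⊥ := by
    intro h; rw [h, finrank_bot] at hpos; omega
  obtain ⟨x, hx, hx0⟩ := Submodule.exists_mem_ne_zero_of_ne_bot hnb
  have hnorm : ‖x‖ ≠ 0 := norm_ne_zero_iff.2 hx0
  have hφ₀ : (‖x‖⁻¹ • x) ∈ H₀ ∧ ‖(‖x‖⁻¹ • x)‖ = 1 ∧ ∀ v ∈ (Sidx : Submodule ℝ H), inner ℝ (‖x‖⁻¹ • x) v = (0 : ℝ) := by
    refine ⟨H₀.smul_mem _ hx.2, ?_, ?_⟩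
    · rw [norm_smul, norm_inv, norm_norm, inv_mul_cancel₀ hnorm]
    · intro v hv
      rw [real_inner_smul_left, real_inner_comm, hx.1 v hv, mul_zero]
  haveI hne : Nonempty {φ : H // φ ∈ H₀ ∧ ‖φ‖ = 1 ∧ ∀ v ∈ (Sidx : Submodule ℝ H), inner ℝ φ v = (0 : ℝ)} :=
    ⟨⟨_, hφ₀⟩⟩
  -- boundedness above of the sup's range
  set C : ℝ := ‖(LinearMap.toContinuousLinearMap T : H →L[ℝ] H)‖ with hC
  have hbound : ∀ (φ : H), ‖φ‖ = 1 → |(inner ℝ φ (T φ) : ℝ)| ≤ C := by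
    intro φ hφ
    calc |(inner ℝ φ (T φ) : ℝ)| ≤ ‖φ‖ * ‖T φ‖ := abs_real_inner_le_norm _ _
      _ ≤ ‖φ‖ * (C * ‖φ‖) := by
          gcongr
          exact (LinearMap.toContinuousLinearMap T).le_opNorm φ
      _ = C := by rw [hφ]; ring
  have hbdd : BddAbove (Set.range fun S : {S : Submodule ℝ H // S ≤ H₀ ∧ finrank ℝ S = k - 1} =>
      ⨅ φ : {φ : H // φ ∈ H₀ ∧ ‖φ‖ = 1 ∧ ∀ v ∈ S.1, inner ℝ φ v = (0 : ℝ)},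
        (inner ℝ (φ : H) (T φ) : ℝ)) := by
    refine ⟨max C 0, ?_⟩
    rintro _ ⟨S', rfl⟩
    dsimp only
    rcases isEmpty_or_nonempty {φ : H // φ ∈ H₀ ∧ ‖φ‖ = 1 ∧ ∀ v ∈ S'.1, inner ℝ φ v = (0 : ℝ)} with he | hne'
    · haveI := he
      rw [iInf_of_isEmpty, Real.sInf_empty]
      exact le_max_right _ _
    · obtain ⟨φ⟩ := hne'
      refine le_trans (le_trans (ciInf_le ?_ φ) ?_) (le_max_left _ _)
      · refine ⟨-C, ?_⟩
        rintro _ ⟨ψ, rfl⟩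
        have := hbound ψ ψ.2.2.1
        linarith [(abs_le.1 this).1]
      · have := hbound φ φ.2.2.1
        linarith [(abs_le.1 this).2]
  refine le_trans ?_ (le_ciSup hbdd Sidx)
  refine le_ciInf fun φ => ?_
  have hφU : (φ : H) ∈ U := hmemU φ φ.2.1 φ.2.2.2
  have hφV : ∀ i : Fin (finrank ℝ H), (i : ℕ) < k - 1 → inner ℝ (b i) (φ : H) = (0 : ℝ) := by
    intro i hi
    have hbi : b i ∈ V := by
      apply Submodule.subset_span
      refine ⟨⟨(i : ℕ), hi⟩, ?_⟩
      simp only [hf]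
      rw [dif_pos i.isLt]
    exact (Submodule.mem_orthogonal V (φ : H)).1 hφU.2 (b i) hbi
  have := aux_rayleigh T hT E hE b hb (k - 1) φ hφV
  rw [φ.2.2.1] at this
  simpa using this
end

section
/- For 0 < ρ < 1 and 0 ≤ t ≤ 1, the Bernoulli moment generating function satisfies ρe^t + (1 - ρ) ≤ exp(ρ(t + (e/2)t²)). -/
open Real

theorem stmt_9 (ρ t : ℝ) (hρ0 : 0 < ρ) (hρ1 : ρ < 1) (ht0 : 0 ≤ t) (ht1 : t ≤ 1) :
    ρ * Real.exp t + (1 - ρ) ≤ Real.exp (ρ * (t + (Real.exp 1 / 2) * t ^ 2)) := by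
  have hb := Real.exp_bound' ht0 ht1 (n := 2) (by norm_num)
  have hb' : Real.exp t ≤ 1 + t + 3 / 4 * t ^ 2 := by
    calc Real.exp t ≤ _ := hb
    _ = 1 + t + 3 / 4 * t ^ 2 := by
        simp [Finset.sum_range_succ, Nat.factorial]
        ring
  have he : (3 : ℝ) / 4 ≤ Real.exp 1 / 2 := by
    have := Real.add_one_le_exp (1 : ℝ)
    linarith
  have h2 : ρ * Real.exp t + (1 - ρ) ≤ 1 + ρ * (t + (Real.exp 1 / 2) * t ^ 2) := by
    have hsq : 0 ≤ t ^ 2 := sq_nonneg t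
    nlinarith [mul_le_mul_of_nonneg_left hb' hρ0.le, mul_le_mul_of_nonneg_left he (mul_nonneg hρ0.le hsq)]
  calc ρ * Real.exp t + (1 - ρ) ≤ 1 + ρ * (t + (Real.exp 1 / 2) * t ^ 2) := h2
  _ ≤ _ := by have := Real.add_one_le_exp (ρ * (t + (Real.exp 1 / 2) * t ^ 2)); linarith
end

section
/- Let f(x) = (c/√(ℓ+1))·sin(απ(x-x₀)/(ℓ+1) + t) with c ≥ 1, t ∈ [-π/2, π/2], boundary values δ_L = f(x₀), δ_R = f(x₀+ℓ+1), and δ = max{|δ_L|, |δ_R|}. If the fractional part {α} satisfies {α}π + t > π/2, then α ≥ ⌊α⌋ + 1 - δ√(ℓ+1). -/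
open Real

theorem stmt_17 (ℓ : ℕ) (hℓ : 1 ≤ ℓ) (x₀ : ℤ) (α t c : ℝ)
    (hα : 0 ≤ α) (hc : 1 ≤ c) (ht1 : -(π / 2) ≤ t) (ht2 : t ≤ π / 2)
    (δL δR δ : ℝ)
    (hδL : δL = c / Real.sqrt ((ℓ : ℝ) + 1) * Real.sin t)
    (hδR : δR = c / Real.sqrt ((ℓ : ℝ) + 1) * Real.sin (α * π + t))
    (hδ : δ = max |δL| |δR|)
    (hfrac : Int.fract α * π + t > π / 2) :
    α ≥ (⌊α⌋ : ℝ) + 1 - δ * Real.sqrt ((ℓ : ℝ) + 1) := by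
  have hπ := Real.pi_pos
  set β := Int.fract α with hβ
  have hβ0 : 0 ≤ β := Int.fract_nonneg α
  have hβ1 : β < 1 := Int.fract_lt_one α
  have hs : (0:ℝ) < Real.sqrt ((ℓ : ℝ) + 1) := by positivity
  have hc0 : (0:ℝ) < c := by linarith
  -- key: δ * √(ℓ+1) ≥ 1 - β
  have key : 1 - β ≤ δ * Real.sqrt ((ℓ : ℝ) + 1) := by
    by_cases ht : (π / 2) * (1 - β) ≤ t
    · -- use δL
      have ht0 : 0 ≤ t := le_trans (by nlinarith) ht
      have hsin : 2 / π * t ≤ Real.sin t := Real.mul_le_sin ht0 ht2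
      have h1 : 1 - β ≤ Real.sin t := by
        have : 1 - β ≤ 2 / π * t := by
          rw [div_mul_eq_mul_div, le_div_iff₀ hπ]
          nlinarith
        linarith
      have h2 : 1 - β ≤ |δL| * Real.sqrt ((ℓ : ℝ) + 1) := by
        have : |δL| * Real.sqrt ((ℓ : ℝ) + 1) = c * |Real.sin t| := by
          rw [hδL, abs_mul, abs_div, abs_of_pos hc0, abs_of_pos hs]
          field_simp
        rw [this]
        have := le_abs_self (Real.sin t)
        nlinarith
      calc 1 - β ≤ |δL| * Real.sqrt ((ℓ : ℝ) + 1) := h2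
        _ ≤ δ * Real.sqrt ((ℓ : ℝ) + 1) := by
            apply mul_le_mul_of_nonneg_right _ hs.le
            rw [hδ]; exact le_max_left _ _
    · -- use δR
      push_neg at ht
      set θ := β * π + t with hθ
      have hθ1 : π / 2 < θ := hfrac
      have hθ2 : θ < π / 2 + β * π / 2 := by nlinarith
      have hπθ1 : 0 < π - θ := by nlinarith
      have hπθ2 : π - θ < π / 2 := by linarith
      have hsin : 2 / π * (π - θ) ≤ Real.sin (π - θ) := Real.mul_le_sin hπθ1.le hπθ2.le
      have h1 : 1 - β ≤ Real.sin θ := by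
        rw [← Real.sin_pi_sub θ]
        have : 1 - β ≤ 2 / π * (π - θ) := by
          rw [div_mul_eq_mul_div, le_div_iff₀ hπ]
          nlinarith
        linarith
      have habs : |Real.sin (α * π + t)| = |Real.sin θ| := by
        have hA : α = (⌊α⌋ : ℝ) + β := by
          rw [hβ, Int.floor_add_fract]
        have hαeq : α * π + t = θ + (⌊α⌋ : ℤ) * π := by
          rw [hθ]; push_cast; linear_combination π * hA
        rw [hαeq, Real.sin_add_int_mul_pi, abs_mul]
        rcases Int.even_or_odd ⌊α⌋ with he | he
        · rw [he.neg_one_zpow]; simp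
        · rw [he.neg_one_zpow]; simp
      have h2 : 1 - β ≤ |δR| * Real.sqrt ((ℓ : ℝ) + 1) := by
        have heq : |δR| * Real.sqrt ((ℓ : ℝ) + 1) = c * |Real.sin (α * π + t)| := by
          rw [hδR, abs_mul, abs_div, abs_of_pos hc0, abs_of_pos hs]
          field_simp
        rw [heq, habs]
        have := le_abs_self (Real.sin θ)
        nlinarith
      calc 1 - β ≤ |δR| * Real.sqrt ((ℓ : ℝ) + 1) := h2
        _ ≤ δ * Real.sqrt ((ℓ : ℝ) + 1) := by
            apply mul_le_mul_of_nonneg_right _ hs.le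
            rw [hδ]; exact le_max_right _ _
  have hfl : α = (⌊α⌋ : ℝ) + β := by
    rw [hβ, Int.floor_add_fract]
  linarith
end
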